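/- Let (X,d,μ) satisfy ε-BM(n−1,n) with ε ≥ 0 and n ∈ (1,∞). Let A, B be nonempty Borel sets in X with d(A,B) ≥ r for some r ∈ (0, π), and suppose μ(A) ≥ 1/2. Then μ(B) ≤ 2·(cos(r/2))^{2(n−1)}. -/

import Mathlib

open MeasureTheory ENNReal

/-- The set of `ε`-approximated `t`-intermediate points between `A₀` and `A₁`. -/
def interSet {X : Type*} [PseudoMetricSpace X] (ε t : ℝ) (A₀ A₁ : Set X) : Set X :=
  {x | ∃ x₀ ∈ A₀, ∃ x₁ ∈ A₁,
    |dist x₀ x - t * dist x₀ x₁| ≤ ε ∧ |dist x x₁ - (1 - t) * dist x₀ x₁| ≤ ε}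

/-- The sine distortion coefficient `(sin(t·d)/(t·sin d))^{(n-1)/n}`, set to `+∞` when `d ≥ π`. -/
noncomputable def distCoef (n t d : ℝ) : ℝ≥0∞ :=
  if d < Real.pi then
    ENNReal.ofReal ((Real.sin (t * d) / (t * Real.sin d)) ^ ((n - 1) / n))
  else ⊤

/-- The `ε`-approximated Brunn–Minkowski inequality `ε-BM(n-1, n)`. -/
def BMCond {X : Type*} [PseudoMetricSpace X] [MeasurableSpace X]
    (μ : Measure X) (ε n : ℝ) : Prop :=
  ∀ A₀ A₁ : Set X, MeasurableSet A₀ → MeasurableSet A₁ → A₀.Nonempty → A₁.Nonempty →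
    ∀ t ∈ Set.Ioo (0 : ℝ) 1,
      ENNReal.ofReal (1 - t) * (⨅ x₀ ∈ A₀, ⨅ x₁ ∈ A₁, distCoef n (1 - t) (dist x₀ x₁)) *
          μ A₀ ^ (1 / n)
        + ENNReal.ofReal t * (⨅ x₀ ∈ A₀, ⨅ x₁ ∈ A₁, distCoef n t (dist x₀ x₁)) *
          μ A₁ ^ (1 / n)
      ≤ μ (interSet ε t A₀ A₁) ^ (1 / n)

/-- The concentration function `α(r) = sup {1 - μ(A_r) : μ(A) ≥ 1/2}`. -/
noncomputable def concFn {X : Type*} [PseudoMetricSpace X] [MeasurableSpace X]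
    (μ : Measure X) (r : ℝ) : ℝ :=
  sSup {v : ℝ | ∃ A : Set X, MeasurableSet A ∧ 1 / 2 ≤ μ A ∧
    v = 1 - (μ (Metric.thickening r A)).toReal}

lemma aux_real (n c α β : ℝ) (hn : 1 < n) (hc : 0 < c) (hα : 1/2 ≤ α) (hβ : 0 ≤ β)
    (h : 1/2 * ((1/c) ^ ((n-1)/n)) * (α ^ (1/n) + β ^ (1/n)) ≤ 1) :
    β ≤ 2 * c ^ (2*(n-1)) := by
  have hn0 : (0:ℝ) < n := by linarith
  have hα0 : (0:ℝ) ≤ α := by linarith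
  have hu : (0:ℝ) ≤ α ^ (1/n) := Real.rpow_nonneg hα0 _
  have hv : (0:ℝ) ≤ β ^ (1/n) := Real.rpow_nonneg hβ _
  have hK : (0:ℝ) < (1/c) ^ ((n-1)/n) := Real.rpow_pos_of_pos (by positivity) _
  have amgm : 2 * Real.sqrt (α ^ (1/n) * β ^ (1/n)) ≤ α ^ (1/n) + β ^ (1/n) := by
    nlinarith [sq_nonneg (Real.sqrt (α ^ (1/n)) - Real.sqrt (β ^ (1/n))),
      Real.sq_sqrt hu, Real.sq_sqrt hv, Real.sqrt_mul hu (β ^ (1/n)),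
      Real.sqrt_nonneg (α ^ (1/n)), Real.sqrt_nonneg (β ^ (1/n))]
  have h2 : (1/c) ^ ((n-1)/n) * Real.sqrt (α ^ (1/n) * β ^ (1/n)) ≤ 1 := by
    nlinarith [Real.sqrt_nonneg (α ^ (1/n) * β ^ (1/n))]
  have hsq : Real.sqrt (α ^ (1/n) * β ^ (1/n)) = (α*β) ^ (1/(2*n)) := by
    rw [← Real.mul_rpow hα0 hβ, Real.sqrt_eq_rpow, ← Real.rpow_mul (by positivity : (0:ℝ) ≤ α*β)]
    congr 1
    field_simp
  rw [hsq] at h2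
  have h3 : (β/2) ^ (1/(2*n)) ≤ (α*β) ^ (1/(2*n)) :=
    Real.rpow_le_rpow (by linarith) (by nlinarith) (by positivity)
  have h4 : (β/2) ^ (1/(2*n)) ≤ c ^ ((n-1)/n) := by
    have : (1/c) ^ ((n-1)/n) = (c ^ ((n-1)/n))⁻¹ := by
      rw [one_div, Real.inv_rpow hc.le]
    rw [this] at h2
    have hcp : (0:ℝ) < c ^ ((n-1)/n) := Real.rpow_pos_of_pos hc _
    calc (β/2) ^ (1/(2*n)) ≤ (α*β) ^ (1/(2*n)) := h3
      _ ≤ c ^ ((n-1)/n) := by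
          rw [inv_mul_le_iff₀ hcp, mul_one] at h2
          exact h2
  have h5 : ((β/2) ^ (1/(2*n))) ^ (2*n) ≤ (c ^ ((n-1)/n)) ^ (2*n) :=
    Real.rpow_le_rpow (by positivity) h4 (by positivity)
  rw [← Real.rpow_mul (by positivity), ← Real.rpow_mul hc.le] at h5
  have e1 : 1/(2*n) * (2*n) = 1 := by field_simp
  have e2 : (n-1)/n * (2*n) = 2*(n-1) := by field_simp
  rw [e1, e2, Real.rpow_one] at h5
  linarith

lemma aux_coef (n r d : ℝ) (hn : 1 < n) (hr0 : 0 < r) (hrπ : r < Real.pi) (hd : r ≤ d) :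
    ENNReal.ofReal ((1 / Real.cos (r/2)) ^ ((n-1)/n)) ≤ distCoef n (1/2) d := by
  unfold distCoef
  split_ifs with hdπ
  · have hd2 : 0 < d/2 := by linarith
    have hd2' : d/2 < Real.pi/2 := by linarith
    have hs : 0 < Real.sin (d/2) := Real.sin_pos_of_pos_of_lt_pi (by linarith) (by linarith)
    have hcd : 0 < Real.cos (d/2) := Real.cos_pos_of_mem_Ioo ⟨by linarith, hd2'⟩
    have hcr : 0 < Real.cos (r/2) :=
      Real.cos_pos_of_mem_Ioo ⟨by linarith, by linarith⟩
    have hsind : Real.sin d = 2 * Real.sin (d/2) * Real.cos (d/2) := by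
      have := Real.sin_two_mul (d/2)
      rw [show 2 * (d/2) = d by ring] at this
      linarith
    have hratio : Real.sin ((1/2) * d) / ((1/2) * Real.sin d) = 1 / Real.cos (d/2) := by
      rw [show (1/2 : ℝ) * d = d/2 by ring, hsind]
      rw [div_eq_div_iff (by positivity) hcd.ne']
      ring
    apply ENNReal.ofReal_le_ofReal
    rw [hratio]
    apply Real.rpow_le_rpow (le_of_lt (div_pos one_pos hcr)) _ (by apply div_nonneg <;> linarith)
    have hcos : Real.cos (d/2) ≤ Real.cos (r/2) :=
      Real.cos_le_cos_of_nonneg_of_le_pi (by linarith) (by linarith) (by linarith)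
    rw [div_le_div_iff₀ hcr hcd]
    linarith
  · exact le_top

theorem measure_bound (X : Type*) [MetricSpace X] [CompleteSpace X]
    [TopologicalSpace.SeparableSpace X] [MeasurableSpace X] [BorelSpace X]
    (μ : Measure X) [IsProbabilityMeasure μ] [μ.IsOpenPosMeasure]
    (ε n : ℝ) (hε : 0 ≤ ε) (hn : 1 < n) (hBM : BMCond μ ε n)
    (A B : Set X) (hA : MeasurableSet A) (hB : MeasurableSet B)
    (hAne : A.Nonempty) (hBne : B.Nonempty)
    (r : ℝ) (hr : r ∈ Set.Ioo 0 Real.pi)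
    (hdist : ∀ x ∈ A, ∀ y ∈ B, r ≤ dist x y)
    (hAhalf : 1 / 2 ≤ μ A) :
    μ B ≤ ENNReal.ofReal (2 * Real.cos (r / 2) ^ (2 * (n - 1))) := by
  obtain ⟨hr0, hrπ⟩ := hr
  set c := Real.cos (r/2) with hc
  have hcpos : 0 < c := Real.cos_pos_of_mem_Ioo ⟨by linarith, by linarith⟩
  set K : ℝ := (1/c) ^ ((n-1)/n) with hK
  have hKpos : 0 < K := Real.rpow_pos_of_pos (by positivity) _
  -- lower bound on the infimum
  have hInf : ENNReal.ofReal K ≤ ⨅ x₀ ∈ A, ⨅ x₁ ∈ B, distCoef n (1/2) (dist x₀ x₁) := by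
    refine le_iInf fun x₀ => le_iInf fun hx₀ => le_iInf fun x₁ => le_iInf fun hx₁ => ?_
    exact aux_coef n r _ hn hr0 hrπ (hdist x₀ hx₀ x₁ hx₁)
  -- apply BM at t = 1/2
  have hbm := hBM A B hA hB hAne hBne (1/2) ⟨by norm_num, by norm_num⟩
  rw [show (1 : ℝ) - 1/2 = 1/2 by norm_num] at hbm
  have hμI : μ (interSet ε (1/2) A B) ^ (1/n) ≤ 1 := by
    calc μ (interSet ε (1/2) A B) ^ (1/n) ≤ (1 : ℝ≥0∞) ^ (1/n) :=
          ENNReal.rpow_le_rpow prob_le_one (by positivity)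
      _ = 1 := ENNReal.one_rpow _
  have key : ENNReal.ofReal (1/2) * ENNReal.ofReal K * μ A ^ (1/n)
      + ENNReal.ofReal (1/2) * ENNReal.ofReal K * μ B ^ (1/n) ≤ 1 := by
    refine le_trans (add_le_add ?_ ?_) (hbm.trans hμI) <;>
      exact mul_le_mul' (mul_le_mul' le_rfl hInf) le_rfl
  -- pass to reals
  set α := (μ A).toReal with hαdef
  set β := (μ B).toReal with hβdef
  have hAfin : μ A ≠ ⊤ := measure_ne_top μ A
  have hBfin : μ B ≠ ⊤ := measure_ne_top μ B
  have hα : 1/2 ≤ α := by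
    have := ENNReal.toReal_mono hAfin hAhalf
    simpa using this
  have hβ0 : 0 ≤ β := ENNReal.toReal_nonneg
  have keyR : 1/2 * K * (α ^ (1/n) + β ^ (1/n)) ≤ 1 := by
    have hfin : ENNReal.ofReal (1/2) * ENNReal.ofReal K * μ A ^ (1/n)
        + ENNReal.ofReal (1/2) * ENNReal.ofReal K * μ B ^ (1/n) ≠ ⊤ := by
      apply ENNReal.add_ne_top.mpr
      constructor <;>
        exact ENNReal.mul_ne_top (ENNReal.mul_ne_top ENNReal.ofReal_ne_top ENNReal.ofReal_ne_top)
          (ENNReal.rpow_ne_top_of_nonneg (by positivity) (by assumption))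
    have := ENNReal.toReal_mono (by norm_num) key
    rw [ENNReal.toReal_add (by
        exact ENNReal.mul_ne_top (ENNReal.mul_ne_top ENNReal.ofReal_ne_top ENNReal.ofReal_ne_top)
          (ENNReal.rpow_ne_top_of_nonneg (by positivity) hAfin)) (by
        exact ENNReal.mul_ne_top (ENNReal.mul_ne_top ENNReal.ofReal_ne_top ENNReal.ofReal_ne_top)
          (ENNReal.rpow_ne_top_of_nonneg (by positivity) hBfin)),
      ENNReal.toReal_mul, ENNReal.toReal_mul, ENNReal.toReal_mul, ENNReal.toReal_mul,
      ENNReal.toReal_ofReal (by norm_num : (0:ℝ) ≤ 1/2), ENNReal.toReal_ofReal hKpos.le,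
      ← ENNReal.toReal_rpow, ← ENNReal.toReal_rpow, ENNReal.toReal_one] at this
    rw [mul_add]
    exact this
  have := aux_real n c α β hn hcpos hα hβ0 (by rw [← hK]; exact keyR)
  calc μ B = ENNReal.ofReal β := (ENNReal.ofReal_toReal hBfin).symm
    _ ≤ ENNReal.ofReal (2 * c ^ (2*(n-1))) := ENNReal.ofReal_le_ofReal this
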